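/- Let [F̲,F̄] be a p-box, B = [b₀,b₁] with F̲(b₁) > F̄(b₀), and h continuous, bounded and monotone non-decreasing, with F̲ continuous strictly increasing. Then the upper conditional expectation of h given B over Φ(F̲,F̄) equals (1/(F̄(b₁) − F̄(b₀))) · ( ∫_{F̲⁻¹(F̄(b₀))}^{b₁} h dF̲ + h(b₁)·(F̄(b₁) − F̲(b₁)) ). -/

import Mathlib

open Set Filter MeasureTheory

section Aux

lemma stj_nonneg (F : StieltjesFunction ℝ) (h0 : Tendsto F atBot (nhds 0)) (x : ℝ) :
    0 ≤ F x :=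
  le_of_tendsto h0 (eventually_atBot.2 ⟨x, fun _ hy => F.mono hy⟩)

lemma stj_le_one (F : StieltjesFunction ℝ) (h1 : Tendsto F atTop (nhds 1)) (x : ℝ) :
    F x ≤ 1 :=
  ge_of_tendsto h1 (eventually_atTop.2 ⟨x, fun _ hy => F.mono hy⟩)

lemma integrable_of_bdd {m : Measure ℝ} [IsFiniteMeasure m] {h : ℝ → ℝ}
    (hcont : Continuous h) {C : ℝ} (hbd : ∀ x, |h x| ≤ C) : Integrable h m := by
  refine Integrable.mono' (integrable_const C) hcont.aestronglyMeasurable ?_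
  exact Eventually.of_forall fun x => (Real.norm_eq_abs _ ▸ hbd x)

lemma stj_restrict_finite (F : StieltjesFunction ℝ) (p q : ℝ) :
    IsFiniteMeasure (F.measure.restrict (Ioc p q)) :=
  ⟨by rw [Measure.restrict_apply_univ, F.measure_Ioc]; exact ENNReal.ofReal_lt_top⟩

end Aux

section KeyBound

/-- The key measure-comparison inequality for the sets `Iic s`. -/
lemma key_pointwise (Fl Fu : StieltjesFunction ℝ)
    (hle : ∀ x, Fl x ≤ Fu x)
    (b₀ b₁ c : ℝ) (hb0c : b₀ ≤ c) (hcb1 : c ≤ b₁) (hc : Fl c = Fu b₀)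
    (F : StieltjesFunction ℝ) (henv : ∀ x, Fl x ≤ F x ∧ F x ≤ Fu x)
    (s : ℝ) (hsb1 : s ≤ b₁) :
    (F b₁ - F b₀) * (Fl.measure (Ioc c (min b₁ s))).toReal
      ≤ (Fu b₁ - Fu b₀) * (F.measure (Ioc b₀ (min b₁ s))).toReal := by
  have hmin : min b₁ s = s := min_eq_right hsb1
  rw [hmin, Fl.measure_Ioc, F.measure_Ioc]
  have ha : F b₀ ≤ Fu b₀ := (henv b₀).2
  have hFb1 : Fl b₁ ≤ F b₁ := (henv b₁).1
  have hFb1u : F b₁ ≤ Fu b₁ := (henv b₁).2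
  have hb01 : b₀ ≤ b₁ := hb0c.trans hcb1
  have hDnn : 0 ≤ Fu b₁ - Fu b₀ := sub_nonneg.2 (Fu.mono hb01)
  rcases le_or_gt s c with h1 | h1
  · have hz : ENNReal.ofReal (Fl s - Fl c) = 0 :=
      ENNReal.ofReal_eq_zero.2 (sub_nonpos.2 (Fl.mono h1))
    rw [hz]
    simp only [ENNReal.toReal_zero, mul_zero]
    exact mul_nonneg hDnn ENNReal.toReal_nonneg
  · have hFls : Fu b₀ ≤ Fl s := hc ▸ Fl.mono h1.le
    have hb0s : b₀ ≤ s := hb0c.trans h1.le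
    rw [ENNReal.toReal_ofReal (by rw [hc]; linarith),
      ENNReal.toReal_ofReal (sub_nonneg.2 (F.mono hb0s)), hc]
    have hlF : Fl s ≤ F s := (henv s).1
    have hlU : Fl s ≤ Fu b₁ := (Fl.mono hsb1).trans ((hle b₁))
    nlinarith [mul_nonneg hDnn (sub_nonneg.2 hlF),
      mul_nonneg (sub_nonneg.2 ha) (sub_nonneg.2 hlU),
      mul_nonneg (sub_nonneg.2 hFb1u) (sub_nonneg.2 hFls)]

/-- The upper bound: every feasible `F` has conditional expectation at most the claimed value. -/
lemma bound_le (Fl Fu : StieltjesFunction ℝ)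
    (hle : ∀ x, Fl x ≤ Fu x)
    (b₀ b₁ c : ℝ) (hb0c : b₀ ≤ c) (hcb1 : c < b₁) (hc : Fl c = Fu b₀)
    (hpos : Fu b₀ < Fl b₁)
    (h : ℝ → ℝ) (hcont : Continuous h) (C : ℝ) (hbd : ∀ x, |h x| ≤ C)
    (hmono : Monotone h)
    (F : StieltjesFunction ℝ)
    (henv : ∀ x, Fl x ≤ F x ∧ F x ≤ Fu x) :
    (∫ x in Ioc b₀ b₁, h x ∂F.measure) / (F b₁ - F b₀)
      ≤ (Fu b₁ - Fu b₀)⁻¹ *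
        ((∫ x in Ioc c b₁, h x ∂Fl.measure) + h b₁ * (Fu b₁ - Fl b₁)) := by
  haveI hμfin : IsFiniteMeasure (F.measure.restrict (Ioc b₀ b₁)) := stj_restrict_finite F b₀ b₁
  haveI hνfin : IsFiniteMeasure (Fl.measure.restrict (Ioc c b₁)) := stj_restrict_finite Fl c b₁
  have hd : 0 < F b₁ - F b₀ := by
    have h1 := (henv b₀).2; have h2 := (henv b₁).1; linarith
  have hD : 0 < Fu b₁ - Fu b₀ := by have := hle b₁; linarith
  set g : ℝ → ℝ := fun x => h b₁ - h x with hgdef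
  have hgm : Measurable g := measurable_const.sub hcont.measurable
  have hgint : Integrable g (F.measure.restrict (Ioc b₀ b₁)) :=
    (integrable_const _).sub (integrable_of_bdd hcont hbd)
  have hgint' : Integrable g (Fl.measure.restrict (Ioc c b₁)) :=
    (integrable_const _).sub (integrable_of_bdd hcont hbd)
  have hgnn : 0 ≤ᵐ[F.measure.restrict (Ioc b₀ b₁)] g :=
    (ae_restrict_iff' measurableSet_Ioc).2
      (Eventually.of_forall fun x hx => sub_nonneg.2 (hmono hx.2))
  have hgnn' : 0 ≤ᵐ[Fl.measure.restrict (Ioc c b₁)] g :=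
    (ae_restrict_iff' measurableSet_Ioc).2
      (Eventually.of_forall fun x hx => sub_nonneg.2 (hmono hx.2))
  have hgb : ∀ x, g x ≤ 2 * C := by
    intro x
    have h1 := abs_le.1 (hbd x); have h2 := abs_le.1 (hbd b₁)
    simp only [hgdef]; linarith
  have key1 : ∫ x in Ioc b₀ b₁, g x ∂F.measure
      = ∫ t in Ioc 0 (2*C), ((F.measure.restrict (Ioc b₀ b₁)) {a | t ≤ g a}).toReal :=
    hgint.integral_eq_integral_Ioc_meas_le hgnn (Eventually.of_forall hgb)
  have key2 : ∫ x in Ioc c b₁, g x ∂Fl.measure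
      = ∫ t in Ioc 0 (2*C), ((Fl.measure.restrict (Ioc c b₁)) {a | t ≤ g a}).toReal :=
    hgint'.integral_eq_integral_Ioc_meas_le hgnn' (Eventually.of_forall hgb)
  have hSm : ∀ t : ℝ, MeasurableSet {a : ℝ | t ≤ g a} := fun t =>
    measurableSet_le measurable_const hgm
  -- the pointwise comparison
  have hcomp : ∀ t ∈ Ioc (0:ℝ) (2*C),
      (F b₁ - F b₀) * ((Fl.measure.restrict (Ioc c b₁)) {a | t ≤ g a}).toReal
        ≤ (Fu b₁ - Fu b₀) * ((F.measure.restrict (Ioc b₀ b₁)) {a | t ≤ g a}).toReal := by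
    intro t ht
    rw [Measure.restrict_apply (hSm t), Measure.restrict_apply (hSm t)]
    by_cases hS : {a : ℝ | t ≤ g a}.Nonempty
    · have hSc : IsClosed {a : ℝ | t ≤ g a} :=
        isClosed_le continuous_const (continuous_const.sub hcont)
      have hSbdd : BddAbove {a : ℝ | t ≤ g a} := by
        refine ⟨b₁, fun x hx => ?_⟩
        by_contra hxb; push_neg at hxb
        have := hmono hxb.le
        simp only [mem_setOf_eq, hgdef] at hx; linarith [ht.1]
      have hsmem : sSup {a : ℝ | t ≤ g a} ∈ {a : ℝ | t ≤ g a} := hSc.csSup_mem hS hSbdd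
      set s := sSup {a : ℝ | t ≤ g a} with hsdef
      have hSeq : {a : ℝ | t ≤ g a} = Iic s := by
        ext x; constructor
        · exact fun hx => le_csSup hSbdd hx
        · intro hx
          simp only [mem_setOf_eq, hgdef] at hsmem ⊢
          have hxs := hmono hx
          linarith
      have hsb1 : s ≤ b₁ := by
        by_contra hh; push_neg at hh
        have := hmono hh.le
        simp only [mem_setOf_eq, hgdef] at hsmem
        linarith [ht.1]
      rw [hSeq, inter_comm _ (Ioc c b₁), inter_comm _ (Ioc b₀ b₁),
        Set.Ioc_inter_Iic, Set.Ioc_inter_Iic]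
      exact key_pointwise Fl Fu hle b₀ b₁ c hb0c hcb1.le hc F henv s hsb1
    · rw [not_nonempty_iff_eq_empty] at hS
      rw [hS]
      simp only [empty_inter, measure_empty, ENNReal.toReal_zero, mul_zero, le_refl]
  have hmeas2 : Measurable fun t : ℝ =>
      ((F.measure.restrict (Ioc b₀ b₁)) {a | t ≤ g a}).toReal :=
    Measurable.ennreal_toReal
      (Antitone.measurable fun _ _ hst => measure_mono fun _ ha => hst.trans ha)
  haveI : IsFiniteMeasure (volume.restrict (Ioc (0:ℝ) (2*C))) :=
    ⟨by rw [Measure.restrict_apply_univ]; exact measure_Ioc_lt_top⟩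
  have hint2 : Integrable (fun t => (Fu b₁ - Fu b₀) *
      ((F.measure.restrict (Ioc b₀ b₁)) {a | t ≤ g a}).toReal)
      (volume.restrict (Ioc 0 (2*C))) := by
    apply Integrable.const_mul
    refine Integrable.mono' (integrable_const ((F.measure (Ioc b₀ b₁)).toReal))
      hmeas2.aestronglyMeasurable (Eventually.of_forall fun t => ?_)
    rw [Real.norm_eq_abs, abs_of_nonneg ENNReal.toReal_nonneg]
    refine ENNReal.toReal_mono ?_ ?_
    · rw [F.measure_Ioc]; exact ENNReal.ofReal_ne_top
    · rw [Measure.restrict_apply (hSm t)]; exact measure_mono inter_subset_right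
  have hstar : (F b₁ - F b₀) * ∫ x in Ioc c b₁, g x ∂Fl.measure
      ≤ (Fu b₁ - Fu b₀) * ∫ x in Ioc b₀ b₁, g x ∂F.measure := by
    rw [key1, key2, ← integral_const_mul, ← integral_const_mul]
    refine integral_mono_of_nonneg
      (Eventually.of_forall fun t => mul_nonneg hd.le ENNReal.toReal_nonneg) hint2 ?_
    exact (ae_restrict_iff' measurableSet_Ioc).2 (Eventually.of_forall hcomp)
  have hIg : ∫ x in Ioc b₀ b₁, g x ∂F.measure
      = h b₁ * (F b₁ - F b₀) - ∫ x in Ioc b₀ b₁, h x ∂F.measure := by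
    have : ∫ x in Ioc b₀ b₁, g x ∂F.measure
        = ∫ x in Ioc b₀ b₁, (h b₁ - h x) ∂F.measure := rfl
    rw [this, integral_sub (integrable_const _) (integrable_of_bdd hcont hbd), integral_const,
      measureReal_def, Measure.restrict_apply_univ, F.measure_Ioc, ENNReal.toReal_ofReal hd.le, smul_eq_mul]
    ring
  have hIg' : ∫ x in Ioc c b₁, g x ∂Fl.measure
      = h b₁ * (Fl b₁ - Fu b₀) - ∫ x in Ioc c b₁, h x ∂Fl.measure := by
    have h0 : (0:ℝ) ≤ Fl b₁ - Fl c := sub_nonneg.2 (Fl.mono hcb1.le)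
    have : ∫ x in Ioc c b₁, g x ∂Fl.measure
        = ∫ x in Ioc c b₁, (h b₁ - h x) ∂Fl.measure := rfl
    rw [this, integral_sub (integrable_const _) (integrable_of_bdd hcont hbd), integral_const,
      measureReal_def, Measure.restrict_apply_univ, Fl.measure_Ioc, ENNReal.toReal_ofReal h0, smul_eq_mul, hc]
    ring
  rw [hIg, hIg'] at hstar
  rw [inv_mul_eq_div, div_le_div_iff₀ hd hD]
  nlinarith [hstar]

end KeyBound

section Construction

/-- Construction of the optimal distribution function. -/
lemma exists_opt (Fl Fu : StieltjesFunction ℝ) (hle : ∀ x, Fl x ≤ Fu x)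
    (hFlc : Continuous Fl) (b₀ b₁ : ℝ) :
    ∃ Fs : StieltjesFunction ℝ,
      ∀ x, Fs x = if x < b₁ then min (Fu x) (max (Fu b₀) (Fl x)) else Fu x := by
  refine ⟨⟨fun x => if x < b₁ then min (Fu x) (max (Fu b₀) (Fl x)) else Fu x, ?_, ?_⟩,
    fun x => rfl⟩
  · intro x y hxy
    dsimp only
    by_cases hx : x < b₁
    · by_cases hy : y < b₁
      · rw [if_pos hx, if_pos hy]
        exact min_le_min (Fu.mono hxy) (max_le_max le_rfl (Fl.mono hxy))
      · rw [if_pos hx, if_neg hy]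
        exact (min_le_left _ _).trans (Fu.mono hxy)
    · have hy : ¬ y < b₁ := fun hy => hx (lt_of_le_of_lt hxy hy)
      rw [if_neg hx, if_neg hy]
      exact Fu.mono hxy
  · intro x
    by_cases hx : x < b₁
    · have hev : (fun y => if y < b₁ then min (Fu y) (max (Fu b₀) (Fl y)) else Fu y)
          =ᶠ[nhdsWithin x (Ici x)] (fun y => min (Fu y) (max (Fu b₀) (Fl y))) :=
        eventually_of_mem (mem_nhdsWithin_of_mem_nhds (Iio_mem_nhds hx))
          fun y hy => if_pos hy
      refine ContinuousWithinAt.congr_of_eventuallyEq ?_ hev (if_pos hx)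
      exact (Fu.right_continuous x).min
        (continuousWithinAt_const.max hFlc.continuousWithinAt)
    · refine (Fu.right_continuous x).congr (fun y hy => if_neg ?_) (if_neg hx)
      exact not_lt.2 ((not_lt.1 hx).trans hy)

/-- The value of the objective at the optimal distribution. -/
lemma opt_value (Fl Fu : StieltjesFunction ℝ)
    (hle : ∀ x, Fl x ≤ Fu x) (hFlc : Continuous Fl)
    (b₀ b₁ c : ℝ) (hb01 : b₀ < b₁) (hb0c : b₀ ≤ c) (hcb1 : c < b₁) (hc : Fl c = Fu b₀)
    (h : ℝ → ℝ) (hcont : Continuous h) (C : ℝ) (hbd : ∀ x, |h x| ≤ C)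
    (Fs : StieltjesFunction ℝ)
    (hFs : ∀ x, Fs x = if x < b₁ then min (Fu x) (max (Fu b₀) (Fl x)) else Fu x) :
    ∫ x in Ioc b₀ b₁, h x ∂Fs.measure
      = (∫ x in Ioc c b₁, h x ∂Fl.measure) + h b₁ * (Fu b₁ - Fl b₁) := by
  have hfb : ∀ x, b₁ ≤ x → Fs x = Fu x := fun x hx => by
    rw [hFs]; exact if_neg (not_lt.2 hx)
  have hfm : ∀ x, c ≤ x → x < b₁ → Fs x = Fl x := fun x h1 h2 => by
    rw [hFs, if_pos h2, max_eq_right (hc ▸ Fl.mono h1), min_eq_right (hle x)]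
  have hfb0 : Fs b₀ = Fu b₀ := by
    rw [hFs, if_pos hb01, max_eq_left (hle b₀), min_self]
  have hfc : Fs c = Fu b₀ := by
    rw [hFs, if_pos hcb1, hc, max_self, min_eq_right (Fu.mono hb0c)]
  have hnb : (nhdsWithin b₁ (Iio b₁)).NeBot := inferInstance
  have hleftFl : Function.leftLim Fl b₁ = Fl b₁ :=
    leftLim_eq_of_tendsto ((hFlc.tendsto b₁).mono_left nhdsWithin_le_nhds)
  have hleftFs : Function.leftLim Fs b₁ = Fl b₁ := by
    refine leftLim_eq_of_tendsto ?_
    refine Tendsto.congr' ?_ ((hFlc.tendsto b₁).mono_left nhdsWithin_le_nhds)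
    exact eventually_of_mem (Ioo_mem_nhdsLT_of_mem ⟨hcb1, le_rfl⟩)
      fun y hy => (hfm y hy.1.le hy.2).symm
  have hsingFs : Fs.measure {b₁} = ENNReal.ofReal (Fu b₁ - Fl b₁) := by
    rw [Fs.measure_singleton, hleftFs, hfb b₁ le_rfl]
  have hsingFl : Fl.measure {b₁} = 0 := by
    rw [Fl.measure_singleton, hleftFl, sub_self, ENNReal.ofReal_zero]
  have hrestr : Fs.measure.restrict (Ioo c b₁) = Fl.measure.restrict (Ioo c b₁) := by
    refine Measure.ext_of_Ioc' _ _ (fun a b hab => ?_) (fun a b hab => ?_)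
    · rw [Measure.restrict_apply measurableSet_Ioc]
      refine ne_of_lt (lt_of_le_of_lt (measure_mono
        (inter_subset_right.trans Ioo_subset_Ioc_self)) ?_)
      rw [Fs.measure_Ioc]; exact ENNReal.ofReal_lt_top
    · rw [Measure.restrict_apply measurableSet_Ioc, Measure.restrict_apply measurableSet_Ioc]
      rcases lt_or_ge b b₁ with hbb | hbb
      · have hset : Ioc a b ∩ Ioo c b₁ = Ioc (max a c) b := by
          ext x
          simp only [mem_inter_iff, mem_Ioc, mem_Ioo, max_lt_iff]
          constructor
          · rintro ⟨⟨h1, h2⟩, h3, h4⟩; exact ⟨⟨h1, h3⟩, h2⟩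
          · rintro ⟨⟨h1, h3⟩, h2⟩; exact ⟨⟨h1, h2⟩, h3, lt_of_le_of_lt h2 hbb⟩
        rw [hset, Fs.measure_Ioc, Fl.measure_Ioc]
        rcases le_or_gt b (max a c) with hba | hba
        · rw [ENNReal.ofReal_of_nonpos (sub_nonpos.2 (Fs.mono hba)),
            ENNReal.ofReal_of_nonpos (sub_nonpos.2 (Fl.mono hba))]
        · rw [hfm b ((le_max_right a c).trans hba.le) hbb,
            hfm (max a c) (le_max_right a c) (hba.trans hbb)]
      · have hset : Ioc a b ∩ Ioo c b₁ = Ioo (max a c) b₁ := by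
          ext x
          simp only [mem_inter_iff, mem_Ioc, mem_Ioo, max_lt_iff]
          constructor
          · rintro ⟨⟨h1, h2⟩, h3, h4⟩; exact ⟨⟨h1, h3⟩, h4⟩
          · rintro ⟨⟨h1, h3⟩, h4⟩; exact ⟨⟨h1, h4.le.trans hbb⟩, h3, h4⟩
        rw [hset, Fs.measure_Ioo, Fl.measure_Ioo, hleftFs, hleftFl]
        rcases lt_or_ge (max a c) b₁ with hm | hm
        · rw [hfm (max a c) (le_max_right a c) hm]
        · have e1 : Fl b₁ - Fs (max a c) ≤ 0 := by
            rw [hfb (max a c) hm]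
            have h2 := Fu.mono hm
            have h3 := hle b₁
            linarith
          have e2 : Fl b₁ - Fl (max a c) ≤ 0 := sub_nonpos.2 (Fl.mono hm)
          rw [ENNReal.ofReal_of_nonpos e1, ENNReal.ofReal_of_nonpos e2]
  haveI i1 := stj_restrict_finite Fs b₀ b₁
  haveI i2 := stj_restrict_finite Fs c b₁
  haveI i3 := stj_restrict_finite Fs b₀ c
  haveI i4 := stj_restrict_finite Fl c b₁
  have hIntOn : IntegrableOn h (Ioc c b₁) Fs.measure := integrable_of_bdd hcont hbd
  have hIntOn2 : IntegrableOn h (Ioc b₀ c) Fs.measure := integrable_of_bdd hcont hbd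
  have hIntOnFl : IntegrableOn h (Ioc c b₁) Fl.measure := integrable_of_bdd hcont hbd
  have hzero : Fs.measure (Ioc b₀ c) = 0 := by
    rw [Fs.measure_Ioc, hfc, hfb0, sub_self, ENNReal.ofReal_zero]
  have hsplit1 : ∫ x in Ioc b₀ b₁, h x ∂Fs.measure = ∫ x in Ioc c b₁, h x ∂Fs.measure := by
    rw [← Ioc_union_Ioc_eq_Ioc hb0c hcb1.le,
      setIntegral_union (Set.Ioc_disjoint_Ioc_of_le le_rfl) measurableSet_Ioc hIntOn2 hIntOn,
      setIntegral_measure_zero _ hzero, zero_add]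
  have hsplit2 : ∫ x in Ioc c b₁, h x ∂Fs.measure
      = (∫ x in Ioo c b₁, h x ∂Fs.measure) + (Fu b₁ - Fl b₁) * h b₁ := by
    rw [← Ioo_union_right hcb1,
      setIntegral_union (Set.disjoint_singleton_right.2 (by simp)) (measurableSet_singleton b₁)
        (hIntOn.mono_set Ioo_subset_Ioc_self)
        (hIntOn.mono_set (singleton_subset_iff.2 (right_mem_Ioc.2 hcb1))),
      integral_singleton, measureReal_def, hsingFs, ENNReal.toReal_ofReal (sub_nonneg.2 (hle b₁)), smul_eq_mul]
  have hsplit3 : ∫ x in Ioc c b₁, h x ∂Fl.measure = ∫ x in Ioo c b₁, h x ∂Fl.measure := by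
    rw [← Ioo_union_right hcb1,
      setIntegral_union (Set.disjoint_singleton_right.2 (by simp)) (measurableSet_singleton b₁)
        (hIntOnFl.mono_set Ioo_subset_Ioc_self)
        (hIntOnFl.mono_set (singleton_subset_iff.2 (right_mem_Ioc.2 hcb1))),
      integral_singleton, measureReal_def, hsingFl]
    simp
  rw [hsplit1, hsplit2, hsplit3, hrestr]
  ring

end Construction

/-- Closed form for the upper conditional expectation of a
monotone non-decreasing `h` given `B = [b₀,b₁]`. -/
theorem upper_conditional_expectation_monotone
    (Fl Fu : StieltjesFunction ℝ)
    (hFl : Tendsto Fl atBot (nhds 0) ∧ Tendsto Fl atTop (nhds 1))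
    (hFu : Tendsto Fu atBot (nhds 0) ∧ Tendsto Fu atTop (nhds 1))
    (hle : ∀ x, Fl x ≤ Fu x)
    (hFlc : Continuous Fl) (hFlsm : StrictMono Fl)
    (b₀ b₁ : ℝ) (hb : b₀ ≤ b₁) (hpos : Fu b₀ < Fl b₁)
    (h : ℝ → ℝ) (hcont : Continuous h) (C : ℝ) (hbd : ∀ x, |h x| ≤ C)
    (hmono : Monotone h)
    (Φ : Set (StieltjesFunction ℝ))
    (hΦ : Φ = {F : StieltjesFunction ℝ |
        (Tendsto F atBot (nhds 0) ∧ Tendsto F atTop (nhds 1)) ∧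
          ∀ x, Fl x ≤ F x ∧ F x ≤ Fu x}) :
    sSup ((fun F : StieltjesFunction ℝ =>
        (∫ x in Ioc b₀ b₁, h x ∂F.measure) / (F b₁ - F b₀)) '' Φ)
      = (Fu b₁ - Fu b₀)⁻¹ *
        ((∫ x in Ioc (sInf {x : ℝ | Fu b₀ ≤ Fl x}) b₁, h x ∂Fl.measure)
          + h b₁ * (Fu b₁ - Fl b₁)) := by
  obtain ⟨hFl0, hFl1⟩ := hFl
  obtain ⟨hFu0, hFu1⟩ := hFu
  have hFlnn := stj_nonneg Fl hFl0
  have hFu0pos : 0 < Fu b₀ :=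
    lt_of_lt_of_le (lt_of_le_of_lt (hFlnn (b₀ - 1)) (hFlsm (by linarith))) (hle b₀)
  have hb01 : b₀ < b₁ := by
    rcases lt_or_eq_of_le hb with hh | hh
    · exact hh
    · exfalso; rw [← hh] at hpos; linarith [hle b₀]
  -- the cut point c
  obtain ⟨a, ha⟩ : ∃ a, Fl a < Fu b₀ := (hFl0.eventually (Iio_mem_nhds hFu0pos)).exists
  have h1 : Fl (min a b₁) ≤ Fu b₀ := le_trans (Fl.mono (min_le_left a b₁)) ha.le
  obtain ⟨c, hcmem, hc⟩ : ∃ c ∈ Icc (min a b₁) b₁, Fl c = Fu b₀ := by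
    have him := intermediate_value_Icc (min_le_right a b₁) hFlc.continuousOn
    obtain ⟨c, hc1, hc2⟩ := him ⟨h1, hpos.le⟩
    exact ⟨c, hc1, hc2⟩
  have hcb1 : c < b₁ := hFlsm.lt_iff_lt.1 (by rw [hc]; exact hpos)
  have hb0c : b₀ ≤ c := hFlsm.le_iff_le.1 (by rw [hc]; exact hle b₀)
  have hsinf : sInf {x : ℝ | Fu b₀ ≤ Fl x} = c := by
    have hset : {x : ℝ | Fu b₀ ≤ Fl x} = Ici c := by
      ext x; simp only [mem_setOf_eq, mem_Ici, ← hc, hFlsm.le_iff_le]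
    rw [hset, csInf_Ici]
  rw [hsinf]
  -- the optimal distribution
  obtain ⟨Fs, hFs⟩ := exists_opt Fl Fu hle hFlc b₀ b₁
  have hlow : ∀ x, x ≤ b₀ → Fs x = Fu x := fun x hx => by
    rw [hFs x, if_pos (lt_of_le_of_lt hx hb01),
      max_eq_left ((Fl.mono hx).trans (hle b₀)), min_eq_left (Fu.mono hx)]
  have hhigh : ∀ x, b₁ ≤ x → Fs x = Fu x := fun x hx => by
    rw [hFs x]; exact if_neg (not_lt.2 hx)
  have hFs0 : Tendsto Fs atBot (nhds 0) :=
    hFu0.congr' (eventually_atBot.2 ⟨b₀, fun x hx => (hlow x hx).symm⟩)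
  have hFs1 : Tendsto Fs atTop (nhds 1) :=
    hFu1.congr' (eventually_atTop.2 ⟨b₁, fun x hx => (hhigh x hx).symm⟩)
  have henvs : ∀ x, Fl x ≤ Fs x ∧ Fs x ≤ Fu x := fun x => by
    rw [hFs x]
    split_ifs with hx
    · exact ⟨le_min (hle x) (le_max_right _ _), min_le_left _ _⟩
    · exact ⟨hle x, le_rfl⟩
  have hFsmem : Fs ∈ Φ := by rw [hΦ]; exact ⟨⟨hFs0, hFs1⟩, henvs⟩
  have hFsden : Fs b₁ - Fs b₀ = Fu b₁ - Fu b₀ := by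
    rw [hFs b₁, if_neg (lt_irrefl b₁), hFs b₀, if_pos hb01,
      max_eq_left (hle b₀), min_self]
  have hval : (∫ x in Ioc b₀ b₁, h x ∂Fs.measure) / (Fs b₁ - Fs b₀)
      = (Fu b₁ - Fu b₀)⁻¹ *
        ((∫ x in Ioc c b₁, h x ∂Fl.measure) + h b₁ * (Fu b₁ - Fl b₁)) := by
    rw [opt_value Fl Fu hle hFlc b₀ b₁ c hb01 hb0c hcb1 hc h hcont C hbd Fs hFs, hFsden,
      inv_mul_eq_div]
  apply le_antisymm
  · apply csSup_le ⟨_, Set.mem_image_of_mem _ hFsmem⟩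
    rintro v ⟨F, hFmem, rfl⟩
    rw [hΦ] at hFmem
    exact bound_le Fl Fu hle b₀ b₁ c hb0c hcb1 hc hpos h hcont C hbd hmono F hFmem.2
  · rw [← hval]
    apply le_csSup
    · refine ⟨(Fu b₁ - Fu b₀)⁻¹ *
        ((∫ x in Ioc c b₁, h x ∂Fl.measure) + h b₁ * (Fu b₁ - Fl b₁)), ?_⟩
      rintro v ⟨F, hFmem, rfl⟩
      rw [hΦ] at hFmem
      exact bound_le Fl Fu hle b₀ b₁ c hb0c hcb1 hc hpos h hcont C hbd hmono F hFmem.2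
    · exact Set.mem_image_of_mem _ hFsmem
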